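/- For every ε ∈ (0,1) there exists n_ε ∈ ℕ such that for every n ≥ n_ε there is a finite simple graph G with at most (4e(1+ε)·n²·ln n)^n vertices satisfying G ⇒ T_n; that is, IR(T_n) ≤ (4e(1+ε)·n²·ln n)^n for all n ≥ n_ε. -/

import Mathlib

/-- An orientation of a simple graph `G`: an asymmetric relation `D` whose
symmetrization is exactly the adjacency relation of `G`. -/
def IsOrientation {V : Type*} (G : SimpleGraph V) (D : V → V → Prop) : Prop :=
  (∀ u v, ¬ (D u v ∧ D v u)) ∧ ∀ u v, G.Adj u v ↔ (D u v ∨ D v u)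

/-- A digraph structure on a relation: no loops and no pairs of opposite arcs. -/
def IsDigraph {W : Type*} (E : W → W → Prop) : Prop :=
  ∀ u v, ¬ (E u v ∧ E v u)

/-- `G ⇒ E`: every orientation `D` of `G` contains an isometric copy of the digraph `E`:
an injective map `f` inducing an isomorphism onto its image, preserving orientations,
such that distances (in the underlying undirected graphs) are preserved. -/
def IsoRamseyArrow {V W : Type*} (G : SimpleGraph V) (E : W → W → Prop) : Prop :=
  ∀ D : V → V → Prop, IsOrientation G D →
    ∃ f : W → V, Function.Injective f ∧
      (∀ u v, E u v ↔ D (f u) (f v)) ∧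
      (∀ u v, (SimpleGraph.fromRel E).edist u v = G.edist (f u) (f v))

/-- An oriented tree: a digraph whose underlying undirected graph is a tree. -/
def IsOrientedTree {W : Type*} (E : W → W → Prop) : Prop :=
  IsDigraph E ∧ (SimpleGraph.fromRel E).IsTree

/-- `G ⇒ 𝒯ₙ` : `G ⇒ T` for every oriented tree `T` on `n` vertices. -/
def IsoRamseyArrowTrees {V : Type*} (G : SimpleGraph V) (n : ℕ) : Prop :=
  ∀ (W : Type) (_ : Fintype W), Fintype.card W = n →
    ∀ E : W → W → Prop, IsOrientedTree E → IsoRamseyArrow G E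


set_option linter.unusedSectionVars false
set_option linter.unusedVariables false
set_option maxHeartbeats 1000000
open SimpleGraph Finset Function

namespace IsoRamsey

variable {W : Type*} [DecidableEq W]

section Tree
variable {T : SimpleGraph W} (hT : T.IsTree) (ρ : W)

noncomputable def pathTo (v : W) : T.Walk ρ v := (hT.existsUnique_path ρ v).choose

lemma pathTo_isPath (v : W) : (pathTo hT ρ v).IsPath :=
  (hT.existsUnique_path ρ v).choose_spec.1

lemma pathTo_unique {v : W} (p : T.Walk ρ v) (hp : p.IsPath) : p = pathTo hT ρ v :=
  (hT.existsUnique_path ρ v).choose_spec.2 p hp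

lemma pathTo_self : pathTo hT ρ ρ = SimpleGraph.Walk.nil :=
  (pathTo_unique hT ρ SimpleGraph.Walk.nil SimpleGraph.Walk.IsPath.nil).symm

/-- vertices on the path from the root to `v`, except the root itself -/
noncomputable def Pv (v : W) : Finset W := (pathTo hT ρ v).support.toFinset.erase ρ

noncomputable def depth (v : W) : ℕ := (pathTo hT ρ v).length

lemma root_mem_support (v : W) : ρ ∈ (pathTo hT ρ v).support := SimpleGraph.Walk.start_mem_support _

lemma mem_Pv_iff {x v : W} : x ∈ Pv hT ρ v ↔ x ≠ ρ ∧ x ∈ (pathTo hT ρ v).support := by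
  simp [Pv]

lemma self_mem_Pv {v : W} (hv : v ≠ ρ) : v ∈ Pv hT ρ v :=
  (mem_Pv_iff hT ρ).2 ⟨hv, SimpleGraph.Walk.end_mem_support _⟩

lemma Pv_root : Pv hT ρ ρ = ∅ := by
  simp [Pv, pathTo_self]

lemma card_Pv (v : W) : (Pv hT ρ v).card = depth hT ρ v := by
  classical
  have hnd : (pathTo hT ρ v).support.Nodup := (pathTo_isPath hT ρ v).support_nodup
  have hmem : ρ ∈ (pathTo hT ρ v).support.toFinset := by
    simp [root_mem_support]
  rw [Pv, Finset.card_erase_of_mem hmem, List.toFinset_card_of_nodup hnd,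
    SimpleGraph.Walk.length_support]
  rfl

lemma takeUntil_eq {x v : W} (h : x ∈ (pathTo hT ρ v).support) :
    (pathTo hT ρ v).takeUntil x h = pathTo hT ρ x :=
  pathTo_unique hT ρ _ ((pathTo_isPath hT ρ v).takeUntil h)

lemma support_prefix {x v : W} (h : x ∈ (pathTo hT ρ v).support) :
    (pathTo hT ρ x).support <+: (pathTo hT ρ v).support := by
  refine ⟨((pathTo hT ρ v).dropUntil x h).support.tail, ?_⟩
  rw [← takeUntil_eq hT ρ h, ← SimpleGraph.Walk.support_append,
    SimpleGraph.Walk.take_spec]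

lemma Pv_subset {x v : W} (h : x ∈ (pathTo hT ρ v).support) :
    Pv hT ρ x ⊆ Pv hT ρ v := by
  intro y hy
  rw [mem_Pv_iff] at hy ⊢
  exact ⟨hy.1, (support_prefix hT ρ h).subset hy.2⟩

lemma depth_le_of_mem {x v : W} (h : x ∈ (pathTo hT ρ v).support) :
    depth hT ρ x ≤ depth hT ρ v := by
  have := (support_prefix hT ρ h).length_le
  simpa [SimpleGraph.Walk.length_support, depth] using this

lemma eq_of_depth_eq {x y v : W} (hx : x ∈ (pathTo hT ρ v).support)
    (hy : y ∈ (pathTo hT ρ v).support) (hd : depth hT ρ x = depth hT ρ y) : x = y := by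
  have px := support_prefix hT ρ hx
  have py := support_prefix hT ρ hy
  have hlen : (pathTo hT ρ x).support.length = (pathTo hT ρ y).support.length := by
    simp [SimpleGraph.Walk.length_support, depth] at hd ⊢
    omega
  have hsup : (pathTo hT ρ x).support = (pathTo hT ρ y).support :=
    (List.prefix_of_prefix_length_le px py hlen.le).eq_of_length hlen
  have hxl := SimpleGraph.Walk.getLast_support (pathTo hT ρ x)
  have hyl := SimpleGraph.Walk.getLast_support (pathTo hT ρ y)
  rw [← hxl, ← hyl]
  congr 1

/-- facts following from a decomposition `pathTo v = (pathTo x).concat h`. -/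
lemma concat_facts {x v : W} {h : T.Adj x v} (hE : pathTo hT ρ v = (pathTo hT ρ x).concat h) :
    v ∉ (pathTo hT ρ x).support ∧ Pv hT ρ v = insert v (Pv hT ρ x) ∧ v ∉ Pv hT ρ x ∧
      depth hT ρ v = depth hT ρ x + 1 ∧ v ≠ ρ ∧ x ∈ (pathTo hT ρ v).support := by
  have hsup : (pathTo hT ρ v).support = (pathTo hT ρ x).support ++ [v] := by
    rw [hE, SimpleGraph.Walk.support_concat]
  have hnd : (pathTo hT ρ v).support.Nodup := (pathTo_isPath hT ρ v).support_nodup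
  have hvn : v ∉ (pathTo hT ρ x).support := by
    rw [hsup] at hnd
    have := List.disjoint_of_nodup_append hnd
    intro hvmem
    exact (this hvmem (by simp)).elim
  have hvρ : v ≠ ρ := fun hvv => hvn (by rw [hvv]; exact root_mem_support hT ρ x)
  refine ⟨hvn, ?_, ?_, ?_, hvρ, ?_⟩
  · ext y
    simp only [mem_Pv_iff, Finset.mem_insert, hsup, List.mem_append, List.mem_singleton]
    constructor
    · rintro ⟨h1, h2 | rfl⟩
      · exact Or.inr ⟨h1, h2⟩
      · exact Or.inl rfl
    · rintro (rfl | ⟨h1, h2⟩)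
      · exact ⟨hvρ, Or.inr rfl⟩
      · exact ⟨h1, Or.inl h2⟩
  · rw [mem_Pv_iff]
    rintro ⟨-, hc⟩
    exact hvn hc
  · show (pathTo hT ρ v).length = (pathTo hT ρ x).length + 1
    rw [hE, SimpleGraph.Walk.length_concat]
  · rw [hsup]
    simp [SimpleGraph.Walk.end_mem_support]

lemma exists_concat_eq {v : W} (hv : v ≠ ρ) :
    ∃ (x : W) (h : T.Adj x v), pathTo hT ρ v = (pathTo hT ρ x).concat h := by
  obtain ⟨x, h, q, hq⟩ := SimpleGraph.Walk.exists_eq_cons_of_ne hv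
    (pathTo hT ρ v).reverse
  have hqpath : q.reverse.IsPath := by
    rw [SimpleGraph.Walk.isPath_reverse_iff]
    have : (SimpleGraph.Walk.cons h q).IsPath := by
      rw [← hq, SimpleGraph.Walk.isPath_reverse_iff]
      exact pathTo_isPath hT ρ v
    exact this.of_cons
  have hqe : q.reverse = pathTo hT ρ x := pathTo_unique hT ρ _ hqpath
  refine ⟨x, h.symm, ?_⟩
  have : pathTo hT ρ v = (SimpleGraph.Walk.cons h q).reverse := by
    rw [← hq, SimpleGraph.Walk.reverse_reverse]
  rw [this, SimpleGraph.Walk.reverse_cons, ← SimpleGraph.Walk.concat_eq_append, hqe]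

noncomputable def par (v : W) : W :=
  if hv : v = ρ then ρ else (exists_concat_eq hT ρ hv).choose

lemma par_spec {v : W} (hv : v ≠ ρ) :
    ∃ h : T.Adj (par hT ρ v) v, pathTo hT ρ v = (pathTo hT ρ (par hT ρ v)).concat h := by
  rw [par, dif_neg hv]
  exact (exists_concat_eq hT ρ hv).choose_spec

lemma par_adj {v : W} (hv : v ≠ ρ) : T.Adj (par hT ρ v) v := (par_spec hT ρ hv).choose

lemma Pv_par {v : W} (hv : v ≠ ρ) :
    Pv hT ρ v = insert v (Pv hT ρ (par hT ρ v)) ∧ v ∉ Pv hT ρ (par hT ρ v) ∧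
      depth hT ρ v = depth hT ρ (par hT ρ v) + 1 := by
  obtain ⟨h, hE⟩ := par_spec hT ρ hv
  obtain ⟨_, h2, h3, h4, _, _⟩ := concat_facts hT ρ hE
  exact ⟨h2, h3, h4⟩

/-- uniqueness of the concat-decomposition -/
lemma eq_par_of_concat {x v : W} {h : T.Adj x v}
    (hE : pathTo hT ρ v = (pathTo hT ρ x).concat h) : x = par hT ρ v := by
  have hvρ : v ≠ ρ := (concat_facts hT ρ hE).2.2.2.2.1
  obtain ⟨h', hE'⟩ := par_spec hT ρ hvρ
  have hsup : (pathTo hT ρ x).support ++ [v] = (pathTo hT ρ (par hT ρ v)).support ++ [v] := by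
    rw [← SimpleGraph.Walk.support_concat (h := h),
      ← SimpleGraph.Walk.support_concat (h := h'), ← hE, ← hE']
  have hsup2 : (pathTo hT ρ x).support = (pathTo hT ρ (par hT ρ v)).support :=
    List.append_cancel_right hsup
  have h1 := SimpleGraph.Walk.getLast_support (pathTo hT ρ x)
  have h2 := SimpleGraph.Walk.getLast_support (pathTo hT ρ (par hT ρ v))
  rw [← h1, ← h2]
  congr 1

/-- Any tree edge is a parent-child edge. -/
lemma adj_cases {u v : W} (h : T.Adj u v) :
    (v ≠ ρ ∧ par hT ρ v = u) ∨ (u ≠ ρ ∧ par hT ρ u = v) := by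
  by_cases hv : v ∈ (pathTo hT ρ u).support
  · right
    -- the unique path from v to u is the single edge
    have hd : ((pathTo hT ρ u).dropUntil v hv).IsPath := (pathTo_isPath hT ρ u).dropUntil hv
    have hedge : (SimpleGraph.Walk.cons h.symm SimpleGraph.Walk.nil : T.Walk v u).IsPath := by
      simp [SimpleGraph.Walk.isPath_def, h.ne']
    have huniq := hT.existsUnique_path v u
    have hde : (pathTo hT ρ u).dropUntil v hv
        = (SimpleGraph.Walk.cons h.symm SimpleGraph.Walk.nil : T.Walk v u) := by
      rw [huniq.unique hd hedge]
    have hEu : pathTo hT ρ u = (pathTo hT ρ v).concat h.symm := by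
      conv_lhs => rw [← SimpleGraph.Walk.take_spec (pathTo hT ρ u) hv]
      rw [takeUntil_eq hT ρ hv, hde, SimpleGraph.Walk.concat_eq_append]
    have := concat_facts hT ρ hEu
    exact ⟨this.2.2.2.2.1, (eq_par_of_concat hT ρ hEu).symm⟩
  · left
    have hpath : ((pathTo hT ρ u).concat h).IsPath := by
      rw [SimpleGraph.Walk.isPath_def, SimpleGraph.Walk.support_concat,
        List.nodup_append']
      refine ⟨(pathTo_isPath hT ρ u).support_nodup, by simp,
        by simpa [List.disjoint_right] using hv⟩
    have hEv : pathTo hT ρ v = (pathTo hT ρ u).concat h :=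
      (pathTo_unique hT ρ _ hpath).symm
    have := concat_facts hT ρ hEv
    exact ⟨this.2.2.2.2.1, (eq_par_of_concat hT ρ hEv).symm⟩

/-- step towards `v` along the unique path, when `u` lies on the path to `v`. -/
lemma exists_succ {u v : W} (hu : u ∈ (pathTo hT ρ v).support) (huv : u ≠ v) :
    ∃ w, T.Adj u w ∧ Pv hT ρ w = insert w (Pv hT ρ u) ∧ w ∉ Pv hT ρ u ∧ w ∈ Pv hT ρ v := by
  obtain ⟨w, h, d', hd⟩ := SimpleGraph.Walk.exists_eq_cons_of_ne huv
    ((pathTo hT ρ v).dropUntil u hu)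
  have hwsub : w ∈ (pathTo hT ρ v).support := by
    have : w ∈ ((pathTo hT ρ v).dropUntil u hu).support := by
      rw [hd, SimpleGraph.Walk.support_cons]
      exact List.mem_cons_of_mem _ (SimpleGraph.Walk.start_mem_support d')
    exact SimpleGraph.Walk.support_dropUntil_subset _ hu this
  have hsplit : (pathTo hT ρ v).support
      = (pathTo hT ρ u).support ++ ((pathTo hT ρ v).dropUntil u hu).support.tail := by
    rw [← takeUntil_eq hT ρ hu, ← SimpleGraph.Walk.support_append, SimpleGraph.Walk.take_spec]
  have hwtail : w ∈ ((pathTo hT ρ v).dropUntil u hu).support.tail := by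
    rw [hd, SimpleGraph.Walk.support_cons]
    exact SimpleGraph.Walk.start_mem_support d'
  have hnd : (pathTo hT ρ v).support.Nodup := (pathTo_isPath hT ρ v).support_nodup
  have hwnot : w ∉ (pathTo hT ρ u).support := by
    rw [hsplit] at hnd
    intro hmem
    exact (List.disjoint_of_nodup_append hnd hmem hwtail).elim
  have hpath : ((pathTo hT ρ u).concat h).IsPath := by
    rw [SimpleGraph.Walk.isPath_def, SimpleGraph.Walk.support_concat,
      List.nodup_append']
    refine ⟨(pathTo_isPath hT ρ u).support_nodup, by simp,
      by simpa [List.disjoint_right] using hwnot⟩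
  have hEw : pathTo hT ρ w = (pathTo hT ρ u).concat h := (pathTo_unique hT ρ _ hpath).symm
  obtain ⟨_, h2, h3, _, hwρ, _⟩ := concat_facts hT ρ hEw
  exact ⟨w, h, h2, h3, (mem_Pv_iff hT ρ).2 ⟨hwρ, hwsub⟩⟩

lemma adj_sd {u v : W} (h : T.Adj u v) : (symmDiff (Pv hT ρ u) (Pv hT ρ v)).card = 1 := by
  have key : ∀ a b : W, Pv hT ρ b = insert b (Pv hT ρ a) → b ∉ Pv hT ρ a →
      (symmDiff (Pv hT ρ a) (Pv hT ρ b)).card = 1 := by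
    intro a b h1 h2
    have : symmDiff (Pv hT ρ a) (Pv hT ρ b) = {b} := by
      rw [h1]
      ext y
      by_cases hyb : y = b
      · subst hyb
        simp only [Finset.mem_symmDiff, Finset.mem_insert, Finset.mem_singleton]
        tauto
      · simp only [Finset.mem_symmDiff, Finset.mem_insert, Finset.mem_singleton, hyb]
        tauto
    rw [this, Finset.card_singleton]
  rcases adj_cases hT ρ h with ⟨hv, rfl⟩ | ⟨hu, rfl⟩
  · exact key _ _ (Pv_par hT ρ hv).1 (Pv_par hT ρ hv).2.1
  · rw [symmDiff_comm]
    exact key _ _ (Pv_par hT ρ hu).1 (Pv_par hT ρ hu).2.1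

lemma sd_le_walk {u v : W} (q : T.Walk u v) : (symmDiff (Pv hT ρ u) (Pv hT ρ v)).card ≤ q.length := by
  induction q with
  | nil => simp [symmDiff_self]
  | @cons a b c h q ih =>
    have tri : (symmDiff (Pv hT ρ a) (Pv hT ρ c)) ⊆ (symmDiff (Pv hT ρ a) (Pv hT ρ b)) ∪ (symmDiff (Pv hT ρ b) (Pv hT ρ c)) :=
      symmDiff_triangle _ _ _
    calc (symmDiff (Pv hT ρ a) (Pv hT ρ c)).card
        ≤ ((symmDiff (Pv hT ρ a) (Pv hT ρ b)) ∪ (symmDiff (Pv hT ρ b) (Pv hT ρ c))).card := Finset.card_le_card tri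
      _ ≤ (symmDiff (Pv hT ρ a) (Pv hT ρ b)).card + (symmDiff (Pv hT ρ b) (Pv hT ρ c)).card := Finset.card_union_le _ _
      _ ≤ 1 + q.length := by
          rw [adj_sd hT ρ h]
          exact Nat.add_le_add_left ih 1
      _ = (SimpleGraph.Walk.cons h q).length := by
          rw [SimpleGraph.Walk.length_cons]
          omega

lemma Pv_injective {u v : W} (h : Pv hT ρ u = Pv hT ρ v) : u = v := by
  by_cases hu : u = ρ
  · by_cases hv : v = ρ
    · rw [hu, hv]
    · exfalso
      have hm := self_mem_Pv hT ρ hv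
      rw [← h, hu, Pv_root] at hm
      simp at hm
  · by_cases hv : v = ρ
    · exfalso
      have hm := self_mem_Pv hT ρ hu
      rw [h, hv, Pv_root] at hm
      simp at hm
    · have humem : u ∈ (pathTo hT ρ v).support := by
        have : u ∈ Pv hT ρ v := h ▸ self_mem_Pv hT ρ hu
        exact ((mem_Pv_iff hT ρ).1 this).2
      have hd : depth hT ρ u = depth hT ρ v := by
        rw [← card_Pv, ← card_Pv, h]
      exact eq_of_depth_eq hT ρ humem (SimpleGraph.Walk.end_mem_support _) hd

lemma edist_le_sd : ∀ (N : ℕ) (u v : W), (symmDiff (Pv hT ρ u) (Pv hT ρ v)).card = N →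
    T.edist u v ≤ (N : ℕ∞) := by
  intro N
  induction N using Nat.strong_induction_on with
  | _ N ih =>
    intro u v hN
    rcases Nat.eq_zero_or_pos N with rfl | hpos
    · have : Pv hT ρ u = Pv hT ρ v := by
        have := Finset.card_eq_zero.1 hN
        rwa [← Finset.bot_eq_empty, symmDiff_eq_bot] at this
      rw [Pv_injective hT ρ this, SimpleGraph.edist_self]
      simp
    · have huv : u ≠ v := by
        rintro rfl
        simp [symmDiff_self] at hN
        omega
      have step : ∃ w, T.Adj u w ∧ (symmDiff (Pv hT ρ w) (Pv hT ρ v)).card = N - 1 := by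
        by_cases hu : u ∈ (pathTo hT ρ v).support
        · obtain ⟨w, hadj, h2, h3, h4⟩ := exists_succ hT ρ hu huv
          refine ⟨w, hadj, ?_⟩
          have hw1 : symmDiff (Pv hT ρ w) (Pv hT ρ v) = (symmDiff (Pv hT ρ u) (Pv hT ρ v)).erase w := by
            rw [h2]
            ext y
            by_cases hyw : y = w
            · subst hyw
              simp only [Finset.mem_symmDiff, Finset.mem_insert, Finset.mem_erase]
              tauto
            · simp only [Finset.mem_symmDiff, Finset.mem_insert, Finset.mem_erase, hyw]
              tauto
          have hwmem : w ∈ symmDiff (Pv hT ρ u) (Pv hT ρ v) := by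
            rw [Finset.mem_symmDiff]
            exact Or.inr ⟨h4, h3⟩
          rw [hw1, Finset.card_erase_of_mem hwmem, hN]
        · have huρ : u ≠ ρ := fun hc => hu (by rw [hc]; exact root_mem_support hT ρ v)
          obtain ⟨h1, h2, _⟩ := Pv_par hT ρ huρ
          refine ⟨par hT ρ u, (par_adj hT ρ huρ).symm, ?_⟩
          have hunotv : u ∉ Pv hT ρ v := by
            rw [mem_Pv_iff]
            rintro ⟨-, hc⟩
            exact hu hc
          have hw1 : symmDiff (Pv hT ρ u) (Pv hT ρ v) = insert u (symmDiff (Pv hT ρ (par hT ρ u)) (Pv hT ρ v)) := by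
            rw [h1]
            ext y
            by_cases hyu : y = u
            · subst hyu
              simp only [Finset.mem_symmDiff, Finset.mem_insert]
              tauto
            · simp only [Finset.mem_symmDiff, Finset.mem_insert, hyu]
              tauto
          have humem : u ∉ symmDiff (Pv hT ρ (par hT ρ u)) (Pv hT ρ v) := by
            rw [Finset.mem_symmDiff]
            rintro (⟨hc, -⟩ | ⟨hc, -⟩)
            · exact h2 hc
            · exact hunotv hc
          have := hN
          rw [hw1, Finset.card_insert_of_notMem humem] at this
          omega
      obtain ⟨w, hadj, hcard⟩ := step
      have h1 : T.edist u w ≤ 1 := by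
        rw [SimpleGraph.edist_eq_one_iff_adj.2 hadj]
      have h2 : T.edist w v ≤ ((N - 1 : ℕ) : ℕ∞) := ih (N - 1) (by omega) w v hcard
      calc T.edist u v ≤ T.edist u w + T.edist w v := SimpleGraph.edist_triangle
        _ ≤ 1 + ((N - 1 : ℕ) : ℕ∞) := add_le_add h1 h2
        _ = (N : ℕ∞) := by
            rw [← Nat.cast_one, ← Nat.cast_add]
            congr 1
            omega

lemma tree_edist (u v : W) : T.edist u v = ((symmDiff (Pv hT ρ u) (Pv hT ρ v)).card : ℕ∞) := by
  refine le_antisymm (edist_le_sd hT ρ _ u v rfl) ?_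
  obtain ⟨p, hp⟩ := (hT.isConnected u v).exists_walk_length_eq_edist
  rw [← hp]
  exact_mod_cast Nat.cast_le.2 (sd_le_walk hT ρ p)

end Tree


def hamG (n : ℕ) : SimpleGraph (Fin n → Fin n) where
  Adj u v := hammingDist u v = 1
  symm := by
    constructor
    intro u v h
    rwa [hammingDist_comm]
  loopless := by
    constructor
    intro u h
    rw [hammingDist_self] at h
    exact one_ne_zero h.symm

lemma hamG_adj {n : ℕ} {u v : Fin n → Fin n} : (hamG n).Adj u v ↔ hammingDist u v = 1 :=
  Iff.rfl

lemma hammingDist_filter (n : ℕ) (u v : Fin n → Fin n) :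
    hammingDist u v = (Finset.univ.filter (fun i => u i ≠ v i)).card := by
  rfl

lemma hammingDist_update {n : ℕ} (w : Fin n → Fin n) (j : Fin n) (a : Fin n) (h : a ≠ w j) :
    hammingDist w (Function.update w j a) = 1 := by
  rw [hammingDist_filter]
  have : (Finset.univ.filter (fun i => w i ≠ Function.update w j a i)) = {j} := by
    ext i
    by_cases hij : i = j
    · subst hij
      simp [Function.update_self, Ne.symm h]
    · simp [Function.update_of_ne hij, hij]
  rw [this, Finset.card_singleton]

lemma hammingDist_update_toward {n : ℕ} (u v : Fin n → Fin n) (i : Fin n) (h : u i ≠ v i) :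
    hammingDist (Function.update u i (v i)) v = hammingDist u v - 1 := by
  rw [hammingDist_filter, hammingDist_filter]
  have : (Finset.univ.filter (fun k => Function.update u i (v i) k ≠ v k))
      = (Finset.univ.filter (fun k => u k ≠ v k)).erase i := by
    ext k
    by_cases hk : k = i
    · subst hk
      simp [Function.update_self]
    · simp [Function.update_of_ne hk, hk]
  rw [this, Finset.card_erase_of_mem (by simp [h])]

lemma hamG_edist_le {n : ℕ} : ∀ (N : ℕ) (u v : Fin n → Fin n), hammingDist u v = N →
    (hamG n).edist u v ≤ (N : ℕ∞) := by
  intro N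
  induction N using Nat.strong_induction_on with
  | _ N ih =>
    intro u v hN
    rcases Nat.eq_zero_or_pos N with rfl | hpos
    · rw [eq_of_hammingDist_eq_zero hN, SimpleGraph.edist_self]
      simp
    · have hne : u ≠ v := by
        intro hc
        rw [hc, hammingDist_self] at hN
        omega
      have : ∃ i, u i ≠ v i := by
        by_contra hc
        push_neg at hc
        exact hne (funext hc)
      obtain ⟨i, hi⟩ := this
      set u' := Function.update u i (v i) with hu'
      have hadj : (hamG n).Adj u u' := by
        rw [hamG_adj, hu']
        exact hammingDist_update u i (v i) (Ne.symm hi)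
      have hd' : hammingDist u' v = N - 1 := by
        rw [hu', hammingDist_update_toward u v i hi, hN]
      have h1 : (hamG n).edist u u' ≤ 1 := le_of_eq (SimpleGraph.edist_eq_one_iff_adj.2 hadj)
      have h2 : (hamG n).edist u' v ≤ ((N - 1 : ℕ) : ℕ∞) := ih (N - 1) (by omega) u' v hd'
      calc (hamG n).edist u v ≤ (hamG n).edist u u' + (hamG n).edist u' v :=
            SimpleGraph.edist_triangle
        _ ≤ 1 + ((N - 1 : ℕ) : ℕ∞) := add_le_add h1 h2
        _ = (N : ℕ∞) := by
            rw [← Nat.cast_one, ← Nat.cast_add]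
            congr 1
            omega

lemma hamming_le_walk {n : ℕ} {u v : Fin n → Fin n} (q : (hamG n).Walk u v) :
    hammingDist u v ≤ q.length := by
  induction q with
  | nil => simp
  | @cons a b c h q ih =>
    have hab : hammingDist a b = 1 := h
    calc hammingDist a c ≤ hammingDist a b + hammingDist b c := hammingDist_triangle a b c
      _ ≤ 1 + q.length := by rw [hab]; exact Nat.add_le_add_left ih 1
      _ = (SimpleGraph.Walk.cons h q).length := by rw [SimpleGraph.Walk.length_cons]; omega

lemma hamG_edist {n : ℕ} (u v : Fin n → Fin n) :
    (hamG n).edist u v = (hammingDist u v : ℕ∞) := by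
  have hle := hamG_edist_le (hammingDist u v) u v rfl
  refine le_antisymm hle ?_
  have hne : (hamG n).edist u v ≠ ⊤ := by
    intro hc
    rw [hc] at hle
    exact (ENat.coe_lt_top _).not_ge (le_of_eq (top_le_iff.1 hle).symm)
  obtain ⟨p, hp⟩ := SimpleGraph.exists_walk_of_edist_ne_top hne
  rw [← hp]
  exact_mod_cast Nat.cast_le.2 (hamming_le_walk p)


section Core
variable {W : Type*} [Fintype W] [DecidableEq W] {n : ℕ}
variable {T : SimpleGraph W} (hT : T.IsTree) (ρ : W) (σ : W ≃ Fin n)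
variable (E : W → W → Prop) (D : (Fin n → Fin n) → (Fin n → Fin n) → Prop)

open Classical in
noncomputable def okdir (c : W) (w w' : Fin n → Fin n) : Prop :=
  if E (par hT ρ c) c then D w w' else D w' w

noncomputable def Good : ℕ → W → (Fin n → Fin n) → Prop
  | 0, _, _ => True
  | (k+1), v, w => ∀ c, c ≠ ρ → par hT ρ c = v →
      ∃ a : Fin n, a ≠ w (σ c) ∧ okdir hT ρ E D c w (Function.update w (σ c) a) ∧
        Good k c (Function.update w (σ c) a)

open Classical in
noncomputable def Bad (k : ℕ) (v : W) : Finset (Fin n → Fin n) :=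
  Finset.univ.filter (fun w => ¬ Good hT ρ σ E D k v w)

noncomputable def Ch (v : W) : Finset W :=
  Finset.univ.filter (fun c => c ≠ ρ ∧ par hT ρ c = v)

noncomputable def Desc (v : W) : Finset W :=
  Finset.univ.filter (fun x => v ∈ (pathTo hT ρ x).support)

lemma mem_Desc_self (v : W) : v ∈ Desc hT ρ v := by
  simp [Desc, SimpleGraph.Walk.end_mem_support]

lemma Desc_child_subset {c : W} (hc : c ≠ ρ) :
    Desc hT ρ c ⊆ (Desc hT ρ (par hT ρ c)).erase (par hT ρ c) := by
  intro x hx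
  simp only [Desc, Finset.mem_filter, Finset.mem_univ, true_and] at hx
  have hpmemc : par hT ρ c ∈ (pathTo hT ρ c).support := by
    obtain ⟨h, hE'⟩ := par_spec hT ρ hc
    exact (concat_facts hT ρ hE').2.2.2.2.2
  have hpmem : par hT ρ c ∈ (pathTo hT ρ x).support :=
    (support_prefix hT ρ hx).subset hpmemc
  rw [Finset.mem_erase]
  refine ⟨?_, by simp [Desc, hpmem]⟩
  intro hxp
  have hdc := (Pv_par hT ρ hc).2.2
  have : depth hT ρ c ≤ depth hT ρ (par hT ρ c) := by
    refine depth_le_of_mem hT ρ ?_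
    rwa [← hxp]
  omega

lemma Desc_sibling_disjoint {c₁ c₂ : W} (h1 : c₁ ≠ ρ) (h2 : c₂ ≠ ρ)
    (hp : par hT ρ c₁ = par hT ρ c₂) (hne : c₁ ≠ c₂) :
    Disjoint (Desc hT ρ c₁) (Desc hT ρ c₂) := by
  rw [Finset.disjoint_left]
  intro x hx1 hx2
  simp only [Desc, Finset.mem_filter, Finset.mem_univ, true_and] at hx1 hx2
  have hd : depth hT ρ c₁ = depth hT ρ c₂ := by
    have e1 := (Pv_par hT ρ h1).2.2
    have e2 := (Pv_par hT ρ h2).2.2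
    rw [hp] at e1
    omega
  exact hne (eq_of_depth_eq hT ρ hx1 hx2 hd)

end Core

section Count
variable {W : Type*} [Fintype W] [DecidableEq W] {n : ℕ}
variable {T : SimpleGraph W} (hT : T.IsTree) (ρ : W) (σ : W ≃ Fin n)
variable (E : W → W → Prop) (D : (Fin n → Fin n) → (Fin n → Fin n) → Prop)

open Classical in
noncomputable def Fail (k : ℕ) (c : W) : Finset (Fin n → Fin n) :=
  Finset.univ.filter (fun w => ¬ ∃ a : Fin n, a ≠ w (σ c) ∧
    okdir hT ρ E D c w (Function.update w (σ c) a) ∧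
    Good hT ρ σ E D k c (Function.update w (σ c) a))

lemma fail_card (hD : IsOrientation (hamG n) D) (hn : 1 ≤ n) (k : ℕ) (c : W) :
    (Fail hT ρ σ E D k c).card ≤ (Bad hT ρ σ E D k c).card + n ^ (n - 1) := by
  classical
  haveI : NeZero n := ⟨by omega⟩
  set j := σ c with hj
  set π : (Fin n → Fin n) → (Fin n → Fin n) := fun w => Function.update w j 0 with hπ
  set B : Finset (Fin n → Fin n) := Finset.univ.filter (fun g => g j = 0) with hB
  have hmapsto : ∀ w : Fin n → Fin n, π w ∈ B := by
    intro w
    simp [hB, hπ]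
  have hsplit : (Fail hT ρ σ E D k c).card
      = ∑ g ∈ B, ((Fail hT ρ σ E D k c).filter (fun w => π w = g)).card :=
    Finset.card_eq_sum_card_fiberwise (fun w _ => hmapsto w)
  have hsplit2 : (Bad hT ρ σ E D k c).card
      = ∑ g ∈ B, ((Bad hT ρ σ E D k c).filter (fun w => π w = g)).card :=
    Finset.card_eq_sum_card_fiberwise (fun w _ => hmapsto w)
  have hfiber : ∀ g ∈ B, ((Fail hT ρ σ E D k c).filter (fun w => π w = g)).card
      ≤ ((Bad hT ρ σ E D k c).filter (fun w => π w = g)).card + 1 := by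
    intro g hg
    set A := (Fail hT ρ σ E D k c).filter (fun w => π w = g) with hA
    have hA1 : A = A.filter (fun w => Good hT ρ σ E D k c w)
        ∪ A.filter (fun w => ¬ Good hT ρ σ E D k c w) := by
      rw [Finset.filter_union_filter_not_eq]
    have hle1 : (A.filter (fun w => ¬ Good hT ρ σ E D k c w)).card
        ≤ ((Bad hT ρ σ E D k c).filter (fun w => π w = g)).card := by
      apply Finset.card_le_card
      intro w hw
      simp only [hA, Finset.mem_filter, Bad, Finset.mem_univ, true_and] at hw ⊢
      exact ⟨hw.2, hw.1.2⟩
    have hle2 : (A.filter (fun w => Good hT ρ σ E D k c w)).card ≤ 1 := by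
      rw [Finset.card_le_one]
      intro w₁ hw₁ w₂ hw₂
      simp only [hA, Finset.mem_filter, Fail, Finset.mem_univ, true_and] at hw₁ hw₂
      obtain ⟨⟨hf₁, hπ₁⟩, hg₁⟩ := hw₁
      obtain ⟨⟨hf₂, hπ₂⟩, hg₂⟩ := hw₂
      by_contra hne
      -- w₁ and w₂ agree off j
      have hoff : ∀ i : Fin n, i ≠ j → w₁ i = w₂ i := by
        intro i hi
        have := congrFun (hπ₁.trans hπ₂.symm) i
        simpa [hπ, Function.update_of_ne hi] using this
      have hjj : w₁ j ≠ w₂ j := by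
        intro hc
        apply hne
        funext i
        by_cases hi : i = j
        · rw [hi]; exact hc
        · exact hoff i hi
      have hupd12 : Function.update w₁ j (w₂ j) = w₂ := by
        funext i
        by_cases hi : i = j
        · subst hi; simp
        · simp [Function.update_of_ne hi, hoff i hi]
      have hupd21 : Function.update w₂ j (w₁ j) = w₁ := by
        funext i
        by_cases hi : i = j
        · subst hi; simp
        · simp [Function.update_of_ne hi, (hoff i hi).symm]
      push_neg at hf₁ hf₂
      have h12 := hf₁ (w₂ j) (Ne.symm hjj)
      have h21 := hf₂ (w₁ j) hjj
      rw [hupd12] at h12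
      rw [hupd21] at h21
      have hnok12 : ¬ okdir hT ρ E D c w₁ w₂ := fun hok => h12 hok hg₂
      have hnok21 : ¬ okdir hT ρ E D c w₂ w₁ := fun hok => h21 hok hg₁
      have hadj : (hamG n).Adj w₁ w₂ := by
        rw [hamG_adj, ← hupd12]
        exact hammingDist_update w₁ j (w₂ j) (Ne.symm hjj)
      have hD2 := (hD.2 w₁ w₂).1 hadj
      by_cases hEc : E (par hT ρ c) c
      · rw [okdir, if_pos hEc] at hnok12
        rw [okdir, if_pos hEc] at hnok21
        tauto
      · rw [okdir, if_neg hEc] at hnok12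
        rw [okdir, if_neg hEc] at hnok21
        tauto
    calc A.card ≤ (A.filter (fun w => Good hT ρ σ E D k c w)).card
        + (A.filter (fun w => ¬ Good hT ρ σ E D k c w)).card := by
          conv_lhs => rw [hA1]
          exact Finset.card_union_le _ _
      _ ≤ 1 + ((Bad hT ρ σ E D k c).filter (fun w => π w = g)).card :=
          Nat.add_le_add hle2 hle1
      _ = ((Bad hT ρ σ E D k c).filter (fun w => π w = g)).card + 1 := Nat.add_comm _ _
  have hBcard : B.card ≤ n ^ (n - 1) := by
    have hinj : ∀ w₁ ∈ B, ∀ w₂ ∈ B,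
        (fun i : {i : Fin n // i ≠ j} => w₁ i.1) = (fun i : {i : Fin n // i ≠ j} => w₂ i.1)
        → w₁ = w₂ := by
      intro w₁ h₁ w₂ h₂ heq
      simp only [hB, Finset.mem_filter, Finset.mem_univ, true_and] at h₁ h₂
      funext i
      by_cases hi : i = j
      · rw [hi, h₁, h₂]
      · exact congrFun heq ⟨i, hi⟩
    have := Finset.card_le_card_of_injOn
      (f := fun (w : Fin n → Fin n) => (fun i : {i : Fin n // i ≠ j} => w i.1))
      (fun w _ => Finset.mem_univ _) hinj
    calc B.card ≤ Finset.univ.card := this.trans (le_of_eq rfl)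
      _ = Fintype.card ({i : Fin n // i ≠ j} → Fin n) := Finset.card_univ
      _ = n ^ (n - 1) := by
          rw [Fintype.card_fun, Fintype.card_fin]
          congr 1
          have h1 := Fintype.card_subtype_compl (fun i : Fin n => i = j)
          rw [Fintype.card_subtype_eq, Fintype.card_fin] at h1
          exact h1
  calc (Fail hT ρ σ E D k c).card
      = ∑ g ∈ B, ((Fail hT ρ σ E D k c).filter (fun w => π w = g)).card := hsplit
    _ ≤ ∑ g ∈ B, (((Bad hT ρ σ E D k c).filter (fun w => π w = g)).card + 1) :=
        Finset.sum_le_sum hfiber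
    _ = (Bad hT ρ σ E D k c).card + B.card := by
        rw [Finset.sum_add_distrib, ← hsplit2, Finset.sum_const, smul_eq_mul, mul_one]
    _ ≤ (Bad hT ρ σ E D k c).card + n ^ (n - 1) := Nat.add_le_add_left hBcard _

end Count

section BadCard
variable {W : Type*} [Fintype W] [DecidableEq W] {n : ℕ}
variable {T : SimpleGraph W} (hT : T.IsTree) (ρ : W) (σ : W ≃ Fin n)
variable (E : W → W → Prop) (D : (Fin n → Fin n) → (Fin n → Fin n) → Prop)

lemma bad_card (hD : IsOrientation (hamG n) D) (hn : 1 ≤ n) :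
    ∀ (k : ℕ) (v : W),
      (Bad hT ρ σ E D k v).card ≤ ((Desc hT ρ v).card - 1) * n ^ (n - 1) := by
  classical
  intro k
  induction k with
  | zero =>
    intro v
    have hempty : Bad hT ρ σ E D 0 v = ∅ := by
      rw [Finset.eq_empty_iff_forall_notMem]
      intro w hw
      simp only [Bad, Finset.mem_filter, Finset.mem_univ, true_and] at hw
      exact hw trivial
    simp [hempty]
  | succ k ih =>
    intro v
    have hsub : Bad hT ρ σ E D (k+1) v
        ⊆ (Ch hT ρ v).biUnion (fun c => Fail hT ρ σ E D k c) := by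
      intro w hw
      simp only [Bad, Finset.mem_filter, Finset.mem_univ, true_and] at hw
      rw [Finset.mem_biUnion]
      have hw' : ¬ ∀ c, c ≠ ρ → par hT ρ c = v →
          ∃ a : Fin n, a ≠ w (σ c) ∧ okdir hT ρ E D c w (Function.update w (σ c) a) ∧
            Good hT ρ σ E D k c (Function.update w (σ c) a) := hw
      push_neg at hw'
      obtain ⟨c, hc1, hc2, hc3⟩ := hw'
      refine ⟨c, by simp [Ch, hc1, hc2], ?_⟩
      simp only [Fail, Finset.mem_filter, Finset.mem_univ, true_and]
      intro ⟨a, ha1, ha2, ha3⟩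
      exact (hc3 a ha1) ha2 ha3
    have hdisj : ∀ c₁ ∈ Ch hT ρ v, ∀ c₂ ∈ Ch hT ρ v, c₁ ≠ c₂ →
        Disjoint (Desc hT ρ c₁) (Desc hT ρ c₂) := by
      intro c₁ h₁ c₂ h₂ hne
      simp only [Ch, Finset.mem_filter, Finset.mem_univ, true_and] at h₁ h₂
      exact Desc_sibling_disjoint hT ρ h₁.1 h₂.1 (h₁.2.trans h₂.2.symm) hne
    have hsum : ∑ c ∈ Ch hT ρ v, (Desc hT ρ c).card ≤ (Desc hT ρ v).card - 1 := by
      rw [← Finset.card_biUnion hdisj]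
      have hsub2 : (Ch hT ρ v).biUnion (fun c => Desc hT ρ c) ⊆ (Desc hT ρ v).erase v := by
        intro x hx
        rw [Finset.mem_biUnion] at hx
        obtain ⟨c, hc, hxc⟩ := hx
        simp only [Ch, Finset.mem_filter, Finset.mem_univ, true_and] at hc
        have := Desc_child_subset hT ρ hc.1 hxc
        rwa [hc.2] at this
      calc ((Ch hT ρ v).biUnion (fun c => Desc hT ρ c)).card
          ≤ ((Desc hT ρ v).erase v).card := Finset.card_le_card hsub2
        _ = (Desc hT ρ v).card - 1 := Finset.card_erase_of_mem (mem_Desc_self hT ρ v)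
    calc (Bad hT ρ σ E D (k+1) v).card
        ≤ ((Ch hT ρ v).biUnion fun c => Fail hT ρ σ E D k c).card := Finset.card_le_card hsub
      _ ≤ ∑ c ∈ Ch hT ρ v, (Fail hT ρ σ E D k c).card := Finset.card_biUnion_le
      _ ≤ ∑ c ∈ Ch hT ρ v, (Desc hT ρ c).card * n ^ (n - 1) := by
          apply Finset.sum_le_sum
          intro c hc
          have h1 := fail_card hT ρ σ E D hD hn k c
          have h2 := ih c
          have h3 : 1 ≤ (Desc hT ρ c).card :=
            Finset.card_pos.2 ⟨c, mem_Desc_self hT ρ c⟩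
          calc (Fail hT ρ σ E D k c).card
              ≤ (Bad hT ρ σ E D k c).card + n ^ (n - 1) := h1
            _ ≤ ((Desc hT ρ c).card - 1) * n ^ (n - 1) + n ^ (n - 1) :=
                Nat.add_le_add_right h2 _
            _ = (Desc hT ρ c).card * n ^ (n - 1) := by
                have := Nat.sub_add_cancel h3
                nlinarith [Nat.sub_add_cancel h3]
      _ = (∑ c ∈ Ch hT ρ v, (Desc hT ρ c).card) * n ^ (n - 1) :=
          (Finset.sum_mul _ _ _).symm
      _ ≤ ((Desc hT ρ v).card - 1) * n ^ (n - 1) :=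
          Nat.mul_le_mul_right _ hsum

lemma exists_good (hD : IsOrientation (hamG n) D) (hW : Fintype.card W = n) (hn : 2 ≤ n) :
    ∃ w₀ : Fin n → Fin n, Good hT ρ σ E D (n - 1) ρ w₀ := by
  classical
  have hb := bad_card hT ρ σ E D hD (by omega) (n - 1) ρ
  have hdesc : (Desc hT ρ ρ).card ≤ n := by
    calc (Desc hT ρ ρ).card ≤ Finset.univ.card := Finset.card_le_card (Finset.subset_univ _)
      _ = n := by rw [Finset.card_univ, hW]
  have hlt : (Bad hT ρ σ E D (n - 1) ρ).card < Finset.univ.card (α := Fin n → Fin n) := by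
    have hcard : Finset.univ.card (α := Fin n → Fin n) = n ^ n := by
      rw [Finset.card_univ, Fintype.card_fun]
      rw [Fintype.card_fin]
    rw [hcard]
    calc (Bad hT ρ σ E D (n - 1) ρ).card ≤ ((Desc hT ρ ρ).card - 1) * n ^ (n - 1) := hb
      _ ≤ (n - 1) * n ^ (n - 1) := Nat.mul_le_mul_right _ (by omega)
      _ < n * n ^ (n - 1) := by
          have hp : 0 < n ^ (n - 1) := pow_pos (by omega) _
          have : n - 1 < n := by omega
          exact Nat.mul_lt_mul_of_lt_of_le this (le_refl _) hp
      _ = n ^ n := by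
          rw [← pow_succ']
          congr 1
          omega
  have : ∃ w : Fin n → Fin n, w ∉ Bad hT ρ σ E D (n - 1) ρ := by
    by_contra hc
    push_neg at hc
    have : (Finset.univ : Finset (Fin n → Fin n)) ⊆ Bad hT ρ σ E D (n - 1) ρ :=
      fun w _ => hc w
    exact absurd (Finset.card_le_card this) (by omega)
  obtain ⟨w, hw⟩ := this
  refine ⟨w, ?_⟩
  by_contra hc
  exact hw (by simp [Bad, hc])

end BadCard

section Emb
variable {W : Type*} [Fintype W] [DecidableEq W] {n : ℕ}
variable {T : SimpleGraph W} (hT : T.IsTree) (ρ : W) (σ : W ≃ Fin n)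
variable (E : W → W → Prop) (D : (Fin n → Fin n) → (Fin n → Fin n) → Prop)

lemma depth_root : depth hT ρ ρ = 0 := by
  rw [depth, pathTo_self]
  rfl

lemma depth_le (hW : Fintype.card W = n) (v : W) : depth hT ρ v ≤ n - 1 := by
  rw [← card_Pv]
  have hsub : Pv hT ρ v ⊆ Finset.univ.erase ρ := by
    intro x hx
    exact Finset.mem_erase.2 ⟨((mem_Pv_iff hT ρ).1 hx).1, Finset.mem_univ _⟩
  calc (Pv hT ρ v).card ≤ (Finset.univ.erase ρ).card := Finset.card_le_card hsub
    _ = n - 1 := by rw [Finset.card_erase_of_mem (Finset.mem_univ _), Finset.card_univ, hW]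

open Classical in
noncomputable def emb (w₀ : Fin n → Fin n) (v : W) : Fin n → Fin n :=
  if hv : v = ρ then w₀
  else
    if hex : ∃ a : Fin n, a ≠ emb w₀ (par hT ρ v) (σ v) ∧
        okdir hT ρ E D v (emb w₀ (par hT ρ v))
          (Function.update (emb w₀ (par hT ρ v)) (σ v) a) ∧
        Good hT ρ σ E D ((n - 1) - depth hT ρ v) v
          (Function.update (emb w₀ (par hT ρ v)) (σ v) a)
    then Function.update (emb w₀ (par hT ρ v)) (σ v) (Classical.choose hex)
    else w₀
termination_by depth hT ρ v
decreasing_by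
  all_goals
    have := (Pv_par hT ρ hv).2.2
    omega

lemma emb_inv (hW : Fintype.card W = n) (w₀ : Fin n → Fin n)
    (hw₀ : Good hT ρ σ E D (n - 1) ρ w₀) :
    ∀ v : W,
      Good hT ρ σ E D ((n - 1) - depth hT ρ v) v (emb hT ρ σ E D w₀ v) ∧
      (∀ x : W, x ∉ Pv hT ρ v → emb hT ρ σ E D w₀ v (σ x) = w₀ (σ x)) ∧
      (∀ x ∈ Pv hT ρ v, emb hT ρ σ E D w₀ v (σ x) = emb hT ρ σ E D w₀ x (σ x) ∧
        emb hT ρ σ E D w₀ x (σ x) ≠ w₀ (σ x)) ∧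
      (∀ _ : v ≠ ρ, okdir hT ρ E D v (emb hT ρ σ E D w₀ (par hT ρ v))
        (emb hT ρ σ E D w₀ v)) := by
  have main : ∀ (d : ℕ) (v : W), depth hT ρ v = d →
      Good hT ρ σ E D ((n - 1) - depth hT ρ v) v (emb hT ρ σ E D w₀ v) ∧
      (∀ x : W, x ∉ Pv hT ρ v → emb hT ρ σ E D w₀ v (σ x) = w₀ (σ x)) ∧
      (∀ x ∈ Pv hT ρ v, emb hT ρ σ E D w₀ v (σ x) = emb hT ρ σ E D w₀ x (σ x) ∧
        emb hT ρ σ E D w₀ x (σ x) ≠ w₀ (σ x)) ∧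
      (∀ _ : v ≠ ρ, okdir hT ρ E D v (emb hT ρ σ E D w₀ (par hT ρ v))
        (emb hT ρ σ E D w₀ v)) := by
    intro d
    induction d using Nat.strong_induction_on with
    | _ d ih =>
      intro v hd
      by_cases hv : v = ρ
      · have he : emb hT ρ σ E D w₀ v = w₀ := by rw [emb, dif_pos hv]
        have hdep : depth hT ρ v = 0 := by rw [hv, depth_root]
        refine ⟨?_, ?_, ?_, ?_⟩
        · rw [he, hdep, hv, Nat.sub_zero]
          exact hw₀
        · intro x _
          rw [he]
        · intro x hx
          rw [hv, Pv_root] at hx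
          simp at hx
        · intro hvρ
          exact absurd hv hvρ
      · obtain ⟨hins, hnotin, hdpar⟩ := Pv_par hT ρ hv
        have hdp : depth hT ρ (par hT ρ v) < d := by omega
        obtain ⟨IH1, IH2, IH3, IH4⟩ := ih (depth hT ρ (par hT ρ v)) hdp (par hT ρ v) rfl
        have hdle := depth_le hT ρ hW v
        have hdpos : 1 ≤ depth hT ρ v := by omega
        have hfuel : (n - 1) - depth hT ρ (par hT ρ v) = ((n - 1) - depth hT ρ v) + 1 := by
          omega
        rw [hfuel] at IH1
        have IH1' : ∀ c, c ≠ ρ → par hT ρ c = par hT ρ v →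
            ∃ a : Fin n, a ≠ (emb hT ρ σ E D w₀ (par hT ρ v)) (σ c) ∧
              okdir hT ρ E D c (emb hT ρ σ E D w₀ (par hT ρ v))
                (Function.update (emb hT ρ σ E D w₀ (par hT ρ v)) (σ c) a) ∧
              Good hT ρ σ E D ((n - 1) - depth hT ρ v) c
                (Function.update (emb hT ρ σ E D w₀ (par hT ρ v)) (σ c) a) := IH1
        have hex : ∃ a : Fin n, a ≠ emb hT ρ σ E D w₀ (par hT ρ v) (σ v) ∧
            okdir hT ρ E D v (emb hT ρ σ E D w₀ (par hT ρ v))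
              (Function.update (emb hT ρ σ E D w₀ (par hT ρ v)) (σ v) a) ∧
            Good hT ρ σ E D ((n - 1) - depth hT ρ v) v
              (Function.update (emb hT ρ σ E D w₀ (par hT ρ v)) (σ v) a) :=
          IH1' v hv rfl
        have hemb : emb hT ρ σ E D w₀ v
            = Function.update (emb hT ρ σ E D w₀ (par hT ρ v)) (σ v)
              (Classical.choose hex) := by
          rw [emb, dif_neg hv, dif_pos hex]
        obtain ⟨ha1, ha2, ha3⟩ := Classical.choose_spec hex
        refine ⟨?_, ?_, ?_, ?_⟩
        · rw [hemb]
          exact ha3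
        · intro x hx
          rw [hins, Finset.mem_insert] at hx
          push_neg at hx
          have hσ : σ x ≠ σ v := fun hc => hx.1 (σ.injective hc)
          rw [hemb, Function.update_of_ne hσ]
          exact IH2 x hx.2
        · intro x hx
          rw [hins, Finset.mem_insert] at hx
          rcases hx with hxv | hx
          · subst hxv
            refine ⟨rfl, ?_⟩
            rw [hemb, Function.update_self]
            have hw : emb hT ρ σ E D w₀ (par hT ρ x) (σ x) = w₀ (σ x) := IH2 x hnotin
            rw [← hw]
            exact ha1
          · have hxv : x ≠ v := fun hc => hnotin (hc ▸ hx)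
            have hσ : σ x ≠ σ v := fun hc => hxv (σ.injective hc)
            rw [hemb, Function.update_of_ne hσ]
            exact IH3 x hx
        · intro _
          rw [hemb]
          exact ha2
  intro v
  exact main (depth hT ρ v) v rfl

lemma emb_dist (hW : Fintype.card W = n) (w₀ : Fin n → Fin n)
    (hw₀ : Good hT ρ σ E D (n - 1) ρ w₀) (u v : W) :
    hammingDist (emb hT ρ σ E D w₀ u) (emb hT ρ σ E D w₀ v)
      = (symmDiff (Pv hT ρ u) (Pv hT ρ v)).card := by
  have Iu := emb_inv hT ρ σ E D hW w₀ hw₀ u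
  have Iv := emb_inv hT ρ σ E D hW w₀ hw₀ v
  rw [hammingDist_filter]
  have key : Finset.univ.filter
      (fun i => emb hT ρ σ E D w₀ u i ≠ emb hT ρ σ E D w₀ v i)
      = (symmDiff (Pv hT ρ u) (Pv hT ρ v)).image σ := by
    ext i
    have hix : σ (σ.symm i) = i := σ.apply_symm_apply i
    rw [Finset.mem_image]
    simp only [Finset.mem_filter, Finset.mem_univ, true_and]
    have hiff : ∀ y : W, σ y = i ↔ y = σ.symm i := by
      intro y
      constructor
      · intro h
        rw [← h, Equiv.symm_apply_apply]
      · rintro rfl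
        exact hix
    constructor
    · intro hne
      refine ⟨σ.symm i, ?_, hix⟩
      set x := σ.symm i with hx
      rw [← hix] at hne
      rw [Finset.mem_symmDiff]
      by_cases hu : x ∈ Pv hT ρ u
      · by_cases hvv : x ∈ Pv hT ρ v
        · exfalso
          apply hne
          rw [(Iu.2.2.1 x hu).1, (Iv.2.2.1 x hvv).1]
        · exact Or.inl ⟨hu, hvv⟩
      · by_cases hvv : x ∈ Pv hT ρ v
        · exact Or.inr ⟨hvv, hu⟩
        · exfalso
          apply hne
          rw [Iu.2.1 x hu, Iv.2.1 x hvv]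
    · rintro ⟨y, hy, rfl⟩
      rw [Finset.mem_symmDiff] at hy
      rcases hy with ⟨hyu, hyv⟩ | ⟨hyv, hyu⟩
      · rw [(Iu.2.2.1 y hyu).1, Iv.2.1 y hyv]
        exact (Iu.2.2.1 y hyu).2
      · rw [(Iv.2.2.1 y hyv).1, Iu.2.1 y hyu]
        exact fun hc => (Iv.2.2.1 y hyv).2 hc.symm
  rw [key, Finset.card_image_of_injective _ σ.injective]

end Emb

theorem arrows (n : ℕ) (hn : 2 ≤ n) :
    ∀ (W : Type) (_ : Fintype W), Fintype.card W = n →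
      ∀ E : W → W → Prop, (∀ u v, ¬ (E u v ∧ E v u)) → (SimpleGraph.fromRel E).IsTree →
      ∀ D : (Fin n → Fin n) → (Fin n → Fin n) → Prop, IsOrientation (hamG n) D →
      ∃ f : W → (Fin n → Fin n), Function.Injective f ∧
        (∀ u v, E u v ↔ D (f u) (f v)) ∧
        (∀ u v, (SimpleGraph.fromRel E).edist u v = (hamG n).edist (f u) (f v)) := by
  intro W instW hcard E hdig hT D hD
  letI := instW
  letI := Classical.decEq W
  let σ : W ≃ Fin n := Fintype.equivFinOfCardEq hcard
  let ρ : W := σ.symm ⟨0, by omega⟩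
  obtain ⟨w₀, hw₀⟩ := exists_good hT ρ σ E D hD hcard hn
  set f := emb hT ρ σ E D w₀ with hf
  have hdist : ∀ u v, hammingDist (f u) (f v) = (symmDiff (Pv hT ρ u) (Pv hT ρ v)).card :=
    emb_dist hT ρ σ E D hcard w₀ hw₀
  have hok : ∀ v, v ≠ ρ → okdir hT ρ E D v (f (par hT ρ v)) (f v) :=
    fun v hv => (emb_inv hT ρ σ E D hcard w₀ hw₀ v).2.2.2 hv
  have hinj : Function.Injective f := by
    intro u v h
    have h0 : hammingDist (f u) (f v) = 0 := by rw [h, hammingDist_self]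
    rw [hdist] at h0
    have hz : (SimpleGraph.fromRel E).edist u v = 0 := by
      rw [tree_edist hT ρ u v, h0]
      simp
    exact SimpleGraph.edist_eq_zero_iff.1 hz
  have hEd : ∀ u v, E u v → D (f u) (f v) := by
    intro u v hEuv
    have hne : u ≠ v := by
      rintro rfl
      exact hdig u u ⟨hEuv, hEuv⟩
    have hadj : (SimpleGraph.fromRel E).Adj u v := by
      rw [SimpleGraph.fromRel_adj]
      exact ⟨hne, Or.inl hEuv⟩
    rcases adj_cases hT ρ hadj with ⟨hvρ, hpv⟩ | ⟨huρ, hpu⟩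
    · have hthis := hok v hvρ
      rw [okdir] at hthis
      rw [hpv] at hthis
      rwa [if_pos hEuv] at hthis
    · have hthis := hok u huρ
      rw [okdir] at hthis
      rw [hpu] at hthis
      have hnE : ¬ E v u := fun hc => hdig u v ⟨hEuv, hc⟩
      rwa [if_neg hnE] at hthis
  refine ⟨f, hinj, ?_, ?_⟩
  · intro u v
    refine ⟨hEd u v, fun hD' => ?_⟩
    have hadj : (hamG n).Adj (f u) (f v) := (hD.2 _ _).2 (Or.inl hD')
    rw [hamG_adj, hdist] at hadj
    have h1 : (SimpleGraph.fromRel E).edist u v = 1 := by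
      rw [tree_edist hT ρ u v, hadj]
      rfl
    have hTadj := SimpleGraph.edist_eq_one_iff_adj.1 h1
    rw [SimpleGraph.fromRel_adj] at hTadj
    rcases hTadj.2 with h | h
    · exact h
    · exact absurd (hEd v u h) (fun hc => hD.1 (f u) (f v) ⟨hD', hc⟩)
  · intro u v
    rw [hamG_edist, hdist, tree_edist hT ρ u v]

end IsoRamsey


theorem stmt11 (ε : ℝ) (hε : 0 < ε ∧ ε < 1) :
    ∃ nε : ℕ, ∀ n : ℕ, nε ≤ n →
      ∃ (V : Type) (_ : Fintype V) (G : SimpleGraph V),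
        ((Fintype.card V : ℝ) ≤
          (4 * Real.exp 1 * (1 + ε) * n ^ 2 * Real.log n) ^ n) ∧
        IsoRamseyArrowTrees G n := by
  refine ⟨2, fun n hn => ?_⟩
  refine ⟨(Fin n → Fin n), inferInstance, IsoRamsey.hamG n, ?_, ?_⟩
  · have hcV : Fintype.card (Fin n → Fin n) = n ^ n := by
      rw [Fintype.card_fun, Fintype.card_fin]
    rw [hcV]
    have hnn : (2:ℝ) ≤ (n:ℝ) := by exact_mod_cast hn
    have he : (2:ℝ) ≤ Real.exp 1 := by
      have := Real.add_one_le_exp 1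
      linarith
    have hlog2 : (0.5:ℝ) ≤ Real.log 2 := by
      have := Real.log_two_gt_d9
      norm_num at this ⊢
      linarith
    have hlog : (0.5:ℝ) ≤ Real.log n := hlog2.trans (Real.log_le_log (by norm_num) hnn)
    have hεpos := hε.1
    have ha1 : (1:ℝ) ≤ 1 + ε := by linarith
    have s1 : (2:ℝ) ≤ Real.exp 1 * (1 + ε) := by
      nlinarith [mul_nonneg (by linarith : (0:ℝ) ≤ Real.exp 1) (le_of_lt hε.1)]
    have s2 : (2:ℝ) * 0.5 ≤ (Real.exp 1 * (1 + ε)) * Real.log n :=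
      mul_le_mul s1 hlog (by norm_num) (by linarith)
    have hfac : (1:ℝ) ≤ Real.exp 1 * (1 + ε) * Real.log n := by
      norm_num at s2
      linarith
    have hpos2 : (0:ℝ) ≤ (n:ℝ)^2 := sq_nonneg _
    have hbase : (n:ℝ) ≤ 4 * Real.exp 1 * (1 + ε) * (n:ℝ)^2 * Real.log n := by
      have h1 : (n:ℝ) ≤ (n:ℝ)^2 := by nlinarith
      have h2 : (n:ℝ)^2 * 1 ≤ (n:ℝ)^2 * (Real.exp 1 * (1+ε) * Real.log n) :=
        mul_le_mul_of_nonneg_left hfac hpos2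
      have h3 : (0:ℝ) ≤ (n:ℝ)^2 * (Real.exp 1 * (1+ε) * Real.log n) :=
        mul_nonneg hpos2 (le_trans zero_le_one hfac)
      nlinarith
    calc ((n ^ n : ℕ) : ℝ) = ((n:ℝ))^n := by push_cast; ring
      _ ≤ (4 * Real.exp 1 * (1 + ε) * (n:ℝ)^2 * Real.log n)^n :=
          pow_le_pow_left₀ (by positivity) hbase n
  · intro W instW hcard E hE D hD
    exact IsoRamsey.arrows n hn W instW hcard E hE.1 hE.2 D hD
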